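/- For any prime ℓ ≡ 2 (mod 3) and integers a₁, a₂ with 0 ≤ a₁, a₂ < ℓ² such that ord_ℓ(-9a₁ + 3a₂ + 1) = 1 (i.e., ℓ divides -9a₁+3a₂+1 exactly once), for every non-negative integer n we have p₃(a₁, ℓ²; ℓ²n + a₂) = 0. -/

import Mathlib

/-- The hook length of the cell in row `i`, column `j` of a Young diagram. -/
def YoungDiagram.hookLength (μ : YoungDiagram) (i j : ℕ) : ℕ :=
  (μ.rowLen i - j) + (μ.colLen j - i) - 1

/-- The number of cells of `μ` whose hook length is divisible by `t`. -/
def hookCount (t : ℕ) (μ : YoungDiagram) : ℕ :=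
  (μ.cells.filter (fun c => t ∣ μ.hookLength c.1 c.2)).card

/-- The Young diagram attached to a partition of `n`. -/
def Nat.Partition.toYoung {n : ℕ} (p : n.Partition) : YoungDiagram :=
  YoungDiagram.ofRowLens (p.parts.sort (· ≥ ·)) (List.Pairwise.sortedGE (p.parts.pairwise_sort _))

/-- `p_t(a,b;n)`: the number of partitions `λ ⊢ n` with `#𝓗_t(λ) ≡ a (mod b)`. -/
def hookP (t a b n : ℕ) : ℕ :=
  Fintype.card {p : n.Partition // hookCount t p.toYoung % b = a % b}

open Finset

lemma list_range_map_sum (n : ℕ) (f : ℕ → ℕ) :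
    ((List.range n).map f).sum = ∑ i ∈ Finset.range n, f i := by
  induction n with
  | zero => simp
  | succ n IH => rw [List.range_succ, Finset.sum_range_succ]; simp [IH]

lemma two_mul_sum_lt (A : Finset ℕ) :
    2 * ∑ i ∈ A, (A.filter (fun j => i < j)).card + A.card = A.card * A.card := by
  induction A using Finset.induction with
  | empty => simp
  | @insert a A ha IH =>
    have h1 : ∀ i ∈ A, ((insert a A).filter (fun j => i < j)).card
        = (A.filter (fun j => i < j)).card + (if i < a then 1 else 0) := by
      intro i hi
      rw [Finset.filter_insert]
      split
      · rw [Finset.card_insert_of_notMem (fun h => ha (Finset.mem_of_mem_filter _ h))]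
      · simp
    rw [Finset.sum_insert ha, Finset.filter_insert]
    rw [if_neg (lt_irrefl a), Finset.sum_congr rfl h1, Finset.sum_add_distrib]
    have h2 : ∑ i ∈ A, (if i < a then 1 else 0) = (A.filter (fun i => i < a)).card := by
      rw [Finset.card_eq_sum_ones, Finset.sum_filter]
    have h3 : (A.filter (fun i => i < a)).card + (A.filter (fun j => a < j)).card = A.card := by
      have h4 := Finset.card_filter_add_card_filter_not (s := A) (p := fun i => i < a)
      have h5 : A.filter (fun i => ¬ i < a) = A.filter (fun j => a < j) := by
        apply Finset.filter_congr
        intro x hx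
        have : x ≠ a := fun h => ha (h ▸ hx)
        constructor <;> omega
      rw [h5] at h4
      omega
    rw [Finset.card_insert_of_notMem ha]
    have hx : (A.card+1)*(A.card+1) = A.card*A.card + 2*A.card+1 := by ring
    omega


def bt (μ : YoungDiagram) (i : ℕ) : ℕ := μ.rowLen i + (μ.colLen 0 - 1 - i)
def bmf (μ : YoungDiagram) (j : ℕ) : ℕ := j + (μ.colLen 0 - μ.colLen j)

lemma hrc (μ : YoungDiagram) (i j : ℕ) : j < μ.rowLen i ↔ i < μ.colLen j := by
  rw [← YoungDiagram.mem_iff_lt_rowLen, YoungDiagram.mem_iff_lt_colLen]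

lemma hcol (μ : YoungDiagram) (j : ℕ) : μ.colLen j ≤ μ.colLen 0 :=
  μ.colLen_anti 0 j (Nat.zero_le j)

lemma bt_anti (μ : YoungDiagram) {i i' : ℕ} (h : i < i') (h' : i' < μ.colLen 0) :
    bt μ i' < bt μ i := by
  have := μ.rowLen_anti i i' h.le
  unfold bt; omega

lemma bmf_mono (μ : YoungDiagram) : StrictMono (bmf μ) := by
  intro j j' h
  have := μ.colLen_anti j j' h.le
  have := hcol μ j
  unfold bmf; omega

lemma hook_eq (μ : YoungDiagram) {i j : ℕ} (hi : i < μ.colLen 0) (hj : j < μ.rowLen i) :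
    μ.hookLength i j = bt μ i - bmf μ j ∧ bmf μ j < bt μ i := by
  have h1 := (hrc μ i j).1 hj
  have h2 := hcol μ j
  unfold YoungDiagram.hookLength bt bmf
  omega

lemma bmf_not_mem (μ : YoungDiagram) {i j i' : ℕ} (hi : i < μ.colLen 0) (hj : j < μ.rowLen i)
    (hi' : i' < μ.colLen 0) : bt μ i' ≠ bmf μ j := by
  have h2 := hcol μ j
  by_cases hc : j < μ.rowLen i'
  · have h1 := (hrc μ i' j).1 hc
    unfold bt bmf; omega
  · have h1 : μ.colLen j ≤ i' := by
      by_contra h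
      exact hc ((hrc μ i' j).2 (by omega))
    unfold bt bmf; omega

-- members of B below bt μ i are exactly bt μ i' for i' in (i, s)
lemma B_below (μ : YoungDiagram) {i : ℕ} (hi : i < μ.colLen 0) :
    ((Finset.range (bt μ i)).filter (fun b => b ∈ (Finset.range (μ.colLen 0)).image (bt μ)))
      = (Finset.Ioo i (μ.colLen 0)).image (bt μ) := by
  ext b
  simp only [mem_filter, mem_range, mem_image, mem_Ioo]
  constructor
  · rintro ⟨hlt, i', hi', rfl⟩
    refine ⟨i', ⟨?_, hi'⟩, rfl⟩
    rcases lt_trichotomy i i' with h | rfl | h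
    · exact h
    · omega
    · exact absurd (bt_anti μ h hi) (by omega)
  · rintro ⟨i', ⟨h1, h2⟩, rfl⟩
    exact ⟨bt_anti μ h1 h2, i', h2, rfl⟩

lemma bt_injOn (μ : YoungDiagram) {T : Finset ℕ} (hT : ∀ x ∈ T, x < μ.colLen 0) :
    Set.InjOn (bt μ) T := by
  intro a ha b hb he
  rcases lt_trichotomy a b with h | h | h
  · exact absurd he (bt_anti μ h (hT b hb)).ne'
  · exact h
  · exact absurd he.symm (bt_anti μ h (hT a ha)).ne'

lemma count_mod_eq (m : ℕ) : ((Finset.range m).filter (fun b => b % 3 = m % 3)).card = m / 3 := by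
  rw [show m / 3 = (Finset.range (m/3)).card by simp]
  apply Finset.card_nbij' (fun b => b / 3) (fun c => m % 3 + 3 * c)
  · intro b hb; simp only [mem_coe, mem_filter, mem_range] at hb ⊢; omega
  · intro c hc; simp only [mem_coe, mem_filter, mem_range] at hc ⊢; omega
  · intro b hb; simp only [mem_coe, mem_filter, mem_range] at hb; dsimp only; omega
  · intro c hc; simp only [mem_coe, mem_range] at hc; dsimp only; omega

lemma img_eq (μ : YoungDiagram) {i : ℕ} (hi : i < μ.colLen 0) :
    (Finset.range (μ.rowLen i)).image (bmf μ)
      = (Finset.range (bt μ i)).filter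
          (fun b => b ∉ (Finset.range (μ.colLen 0)).image (bt μ)) := by
  apply Finset.eq_of_subset_of_card_le
  · intro b hb
    simp only [mem_image, mem_range] at hb
    obtain ⟨j, hj, rfl⟩ := hb
    simp only [mem_filter, mem_range, mem_image, not_exists]
    refine ⟨(hook_eq μ hi hj).2, ?_⟩
    intro i' hi'
    exact bmf_not_mem μ hi hj hi'.1 hi'.2
  · -- card of RHS = rowLen i = card of LHS
    have h1 := Finset.card_filter_add_card_filter_not
      (s := Finset.range (bt μ i))
      (p := fun b => b ∈ (Finset.range (μ.colLen 0)).image (bt μ))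
    rw [B_below μ hi] at h1
    have h2 : ((Finset.Ioo i (μ.colLen 0)).image (bt μ)).card = μ.colLen 0 - 1 - i := by
      rw [Finset.card_image_of_injOn (bt_injOn μ (fun x hx => (Finset.mem_Ioo.mp hx).2))]
      simp [Nat.card_Ioo]; omega
    have h3 : (Finset.range (μ.rowLen i)).card
        ≤ ((Finset.range (μ.rowLen i)).image (bmf μ)).card := by
      rw [Finset.card_image_of_injective _ (bmf_mono μ).injective]
    have h4 : bt μ i = μ.rowLen i + (μ.colLen 0 - 1 - i) := rfl
    simp only [Finset.card_range] at h1 h3 ⊢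
    omega

lemma rowkey (μ : YoungDiagram) (i : ℕ) (hi : i < μ.colLen 0) :
    ((Finset.range (μ.rowLen i)).filter (fun j => 3 ∣ μ.hookLength i j)).card
      + ((Finset.Ioo i (μ.colLen 0)).filter (fun i' => bt μ i' % 3 = bt μ i % 3)).card
      = bt μ i / 3 := by
  classical
  set B := (Finset.range (μ.colLen 0)).image (bt μ) with hB
  -- rewrite the hook filter via bmf
  have e1 : (Finset.range (μ.rowLen i)).filter (fun j => 3 ∣ μ.hookLength i j)
      = (Finset.range (μ.rowLen i)).filter (fun j => bmf μ j % 3 = bt μ i % 3) := by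
    apply Finset.filter_congr
    intro j hj
    obtain ⟨he, hlt⟩ := hook_eq μ hi (Finset.mem_range.mp hj)
    rw [he]
    constructor <;> intro h <;> omega
  -- image of the filtered set
  have e2 : ((Finset.range (μ.rowLen i)).filter (fun j => bmf μ j % 3 = bt μ i % 3)).card
      = (((Finset.range (μ.rowLen i)).image (bmf μ)).filter (fun b => b % 3 = bt μ i % 3)).card := by
    rw [Finset.filter_image]
    rw [Finset.card_image_of_injective _ (bmf_mono μ).injective]
  -- split the mod-class count into in-B and not-in-B parts
  have e3 := Finset.card_filter_add_card_filter_not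
    (s := (Finset.range (bt μ i)).filter (fun b => b % 3 = bt μ i % 3))
    (p := fun b => b ∈ B)
  rw [Finset.filter_comm] at e3
  have e4 : ((Finset.range (bt μ i)).filter (fun b => b ∈ B)).filter
        (fun b => b % 3 = bt μ i % 3)
      = ((Finset.Ioo i (μ.colLen 0)).filter (fun i' => bt μ i' % 3 = bt μ i % 3)).image (bt μ) := by
    rw [hB, B_below μ hi, Finset.filter_image]
  have e5 : (((Finset.Ioo i (μ.colLen 0)).filter
        (fun i' => bt μ i' % 3 = bt μ i % 3)).image (bt μ)).card
      = ((Finset.Ioo i (μ.colLen 0)).filter (fun i' => bt μ i' % 3 = bt μ i % 3)).card :=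
    Finset.card_image_of_injOn (bt_injOn μ (fun x hx => (Finset.mem_Ioo.mp (Finset.mem_of_mem_filter _ hx)).2))
  have e6 : (((Finset.range (bt μ i)).filter (fun b => b ∉ B)).filter
        (fun b => b % 3 = bt μ i % 3)).card
      = (((Finset.range (μ.rowLen i)).image (bmf μ)).filter (fun b => b % 3 = bt μ i % 3)).card := by
    rw [img_eq μ hi]
  have e7 := count_mod_eq (bt μ i)
  rw [e1, e2, ← e6]
  have e8 : ((Finset.range (bt μ i)).filter (fun b => b % 3 = bt μ i % 3)).filter
        (fun b => b ∉ B)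
      = ((Finset.range (bt μ i)).filter (fun b => b ∉ B)).filter
        (fun b => b % 3 = bt μ i % 3) := Finset.filter_comm _ _ _
  have e9 := congrArg Finset.card e8
  have e10 := congrArg Finset.card e4
  omega


lemma cell_fst_lt (μ : YoungDiagram) {c : ℕ × ℕ} (hc : c ∈ μ.cells) :
    c.1 ∈ Finset.range (μ.colLen 0) := by
  rw [Finset.mem_range]
  have h1 : (c.1, c.2) ∈ μ := by simpa using hc
  have h2 := YoungDiagram.mem_iff_lt_colLen.mp h1
  exact lt_of_lt_of_le h2 (μ.colLen_anti 0 c.2 (Nat.zero_le _))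

lemma card_decomp (μ : YoungDiagram) :
    μ.card = ∑ i ∈ Finset.range (μ.colLen 0), μ.rowLen i := by
  rw [YoungDiagram.card, Finset.card_eq_sum_card_fiberwise (f := Prod.fst)
    (t := Finset.range (μ.colLen 0)) (fun c hc => cell_fst_lt μ hc)]
  apply Finset.sum_congr rfl
  intro i _
  rw [μ.rowLen_eq_card]
  rfl

lemma hook_decomp (μ : YoungDiagram) :
    hookCount 3 μ = ∑ i ∈ Finset.range (μ.colLen 0),
      ((Finset.range (μ.rowLen i)).filter (fun j => 3 ∣ μ.hookLength i j)).card := by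
  rw [hookCount, Finset.card_eq_sum_card_fiberwise (f := Prod.fst)
    (t := Finset.range (μ.colLen 0))
    (fun c hc => cell_fst_lt μ (Finset.mem_of_mem_filter _ hc))]
  apply Finset.sum_congr rfl
  intro i _
  have e : (μ.cells.filter (fun c => 3 ∣ μ.hookLength c.1 c.2)).filter (fun c => c.1 = i)
      = ((Finset.range (μ.rowLen i)).filter (fun j => 3 ∣ μ.hookLength i j)).image
          (fun j => (i, j)) := by
    ext ⟨a, b⟩
    simp only [Finset.mem_filter, Finset.mem_image, Finset.mem_range, YoungDiagram.mem_cells]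
    constructor
    · rintro ⟨⟨hm, hd⟩, rfl⟩
      exact ⟨b, ⟨YoungDiagram.mem_iff_lt_rowLen.mp hm, hd⟩, rfl⟩
    · rintro ⟨j, ⟨hj, hd⟩, he⟩
      cases he
      exact ⟨⟨YoungDiagram.mem_iff_lt_rowLen.mpr hj, hd⟩, rfl⟩
  rw [e, Finset.card_image_of_injective _ (fun x y h => congrArg Prod.snd h)]
lemma gauss_aux (n : ℕ) : 2 * (∑ i ∈ Finset.range n, (n - 1 - i)) + n = n * n := by
  rw [show (∑ i ∈ Finset.range n, (n - 1 - i)) = ∑ i ∈ Finset.range n, (fun j => j) (n - 1 - i)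
    from rfl, Finset.sum_range_reflect (fun j => j) n]
  have h1 := Finset.sum_range_id_mul_two n
  have h2 : n * (n - 1) + n = n * n := by
    cases n with
    | zero => rfl
    | succ m => simp [Nat.mul_succ]
  omega

lemma key (μ : YoungDiagram) :
    ∃ x y : ℤ, 3 * (μ.card : ℤ) + 1 - 9 * (hookCount 3 μ : ℤ) = x ^ 2 + x * y + y ^ 2 := by
  classical
  set s := μ.colLen 0 with hs
  set F := ∑ i ∈ Finset.range s, bt μ i / 3 with hF
  set P2 := ∑ i ∈ Finset.range s,
    ((Finset.Ioo i s).filter (fun i' => bt μ i' % 3 = bt μ i % 3)).card with hP2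
  set A : ℕ → Finset ℕ := fun r => (Finset.range s).filter (fun i => bt μ i % 3 = r) with hA
  have hmaps : ∀ i ∈ Finset.range s, bt μ i % 3 ∈ Finset.range 3 :=
    fun i _ => Finset.mem_range.mpr (Nat.mod_lt _ (by norm_num))
  -- E1
  have E1 : hookCount 3 μ + P2 = F := by
    rw [hook_decomp, hP2, hF, ← Finset.sum_add_distrib]
    exact Finset.sum_congr rfl (fun i hi => rowkey μ i (Finset.mem_range.mp hi))
  -- E2
  have E2 : ∑ i ∈ Finset.range s, bt μ i
      = 3 * F + (1 * (A 1).card + 2 * (A 2).card) := by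
    have e2a : ∑ i ∈ Finset.range s, bt μ i
        = 3 * F + ∑ i ∈ Finset.range s, (bt μ i % 3) := by
      rw [hF, Finset.mul_sum, ← Finset.sum_add_distrib]
      exact Finset.sum_congr rfl (fun i _ => by omega)
    have e2b : ∑ i ∈ Finset.range s, (bt μ i % 3)
        = 1 * (A 1).card + 2 * (A 2).card := by
      rw [← Finset.sum_fiberwise_of_maps_to hmaps (fun i => bt μ i % 3)]
      have inner : ∀ r, ∑ i ∈ A r, (bt μ i % 3) = r * (A r).card := by
        intro r
        rw [Finset.sum_congr rfl (fun i hi => (Finset.mem_filter.mp hi).2),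
          Finset.sum_const, smul_eq_mul, mul_comm]
      rw [Finset.sum_range_succ, Finset.sum_range_succ, Finset.sum_range_succ,
        Finset.range_zero, Finset.sum_empty]
      rw [inner 0, inner 1, inner 2]
      ring
    rw [e2a, e2b]
  -- E3
  have E3 : ∑ i ∈ Finset.range s, bt μ i
      = μ.card + ∑ i ∈ Finset.range s, (s - 1 - i) := by
    rw [card_decomp, ← hs, ← Finset.sum_add_distrib]
    rfl
  have E3b : 2 * (∑ i ∈ Finset.range s, (s - 1 - i)) + s = s * s := gauss_aux s
  -- E4
  have E4 : 2 * P2 + ((A 0).card + (A 1).card + (A 2).card)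
      = (A 0).card * (A 0).card + (A 1).card * (A 1).card + (A 2).card * (A 2).card := by
    have e4b : P2 = ∑ r ∈ Finset.range 3, ∑ i ∈ A r,
        ((A r).filter (fun j => i < j)).card := by
      rw [hP2, ← Finset.sum_fiberwise_of_maps_to hmaps
        (fun i => ((Finset.Ioo i s).filter (fun i' => bt μ i' % 3 = bt μ i % 3)).card)]
      apply Finset.sum_congr rfl
      intro r _
      apply Finset.sum_congr rfl
      intro i hi
      have hir := (Finset.mem_filter.mp hi).2
      congr 1
      ext i'
      simp only [Finset.mem_filter, Finset.mem_Ioo, Finset.mem_range, hA]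
      rw [hir]
      constructor
      · rintro ⟨⟨h1, h2⟩, h3⟩; exact ⟨⟨h2, h3⟩, h1⟩
      · rintro ⟨⟨h1, h2⟩, h3⟩; exact ⟨⟨h3, h1⟩, h2⟩
    have g0 := two_mul_sum_lt (A 0)
    have g1 := two_mul_sum_lt (A 1)
    have g2 := two_mul_sum_lt (A 2)
    rw [e4b, Finset.sum_range_succ, Finset.sum_range_succ, Finset.sum_range_succ,
      Finset.range_zero, Finset.sum_empty]
    omega
  -- E5
  have E5 : (A 0).card + (A 1).card + (A 2).card = s := by
    have h := Finset.card_eq_sum_card_fiberwise hmaps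
    rw [Finset.card_range, Finset.sum_range_succ, Finset.sum_range_succ, Finset.sum_range_succ,
      Finset.range_zero, Finset.sum_empty] at h
    simp only [hA]
    omega
  have E3b' : 2 * (∑ i ∈ Finset.range s, (s - 1 - i))
        + ((A 0).card + (A 1).card + (A 2).card)
      = ((A 0).card + (A 1).card + (A 2).card) * ((A 0).card + (A 1).card + (A 2).card) := by
    rw [E5]; exact E3b
  -- final assembly over ℤ
  zify at E1 E2 E3 E3b' E4
  refine ⟨3 * ((A 0).card : ℤ) - (((A 0).card : ℤ) + ((A 1).card : ℤ) + ((A 2).card : ℤ)) - 1,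
    3 * ((A 1).card : ℤ) - (((A 0).card : ℤ) + ((A 1).card : ℤ) + ((A 2).card : ℤ)), ?_⟩
  linarith [sq_nonneg (0:ℤ),
    (by linear_combination (-18 : ℤ) * E1 + 6 * E2 - 6 * E3 - 3 * E3b' + 9 * E4 :
      2 * (3 * (μ.card : ℤ) + 1 - 9 * (hookCount 3 μ : ℤ))
      = 2 * ((3 * ((A 0).card : ℤ) - (((A 0).card : ℤ) + ((A 1).card : ℤ) + ((A 2).card : ℤ)) - 1) ^ 2
          + (3 * ((A 0).card : ℤ) - (((A 0).card : ℤ) + ((A 1).card : ℤ) + ((A 2).card : ℤ)) - 1)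
            * (3 * ((A 1).card : ℤ) - (((A 0).card : ℤ) + ((A 1).card : ℤ) + ((A 2).card : ℤ)))
          + (3 * ((A 1).card : ℤ) - (((A 0).card : ℤ) + ((A 1).card : ℤ) + ((A 2).card : ℤ))) ^ 2))]
lemma zmod_aux (p : ℕ) [hf : Fact p.Prime] (h2 : p % 3 = 2) (x y : ZMod p)
    (h : x ^ 2 + x * y + y ^ 2 = 0) : x = 0 ∧ y = 0 := by
  have hp := hf.out
  have hp3 : p ≠ 3 := by omega
  suffices hy : y = 0 by
    subst hy
    refine ⟨?_, rfl⟩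
    have h1 : x ^ 2 = 0 := by linear_combination h
    exact pow_eq_zero_iff (n := 2) (by norm_num) |>.mp h1
  by_contra hy
  set u : ZMod p := x * y⁻¹ with hudef
  have hyi : y * y⁻¹ = 1 := mul_inv_cancel₀ hy
  have huu : u ^ 2 + u + 1 = 0 := by
    have expand : u ^ 2 + u + 1 = (x ^ 2 + x * y + y ^ 2) * (y⁻¹) ^ 2 := by
      rw [hudef]
      linear_combination (-(x * y⁻¹) - 1 - y * y⁻¹) * hyi
    rw [expand, h, zero_mul]
  have hu1 : u ≠ 1 := by
    intro h1
    rw [h1] at huu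
    have h3 : ((3 : ℕ) : ZMod p) = 0 := by push_cast; linear_combination huu
    have := (ZMod.natCast_eq_zero_iff 3 p).mp h3
    have := (Nat.prime_dvd_prime_iff_eq hp (by norm_num)).mp this
    exact hp3 this
  have hu0 : u ≠ 0 := by
    intro h0
    rw [h0] at huu
    simp at huu
  have hu3 : u ^ 3 = 1 := by linear_combination (u - 1) * huu
  have hunit : IsUnit u := isUnit_iff_ne_zero.mpr hu0
  set w : (ZMod p)ˣ := hunit.unit with hwdef
  have hw3 : w ^ 3 = 1 := by
    ext
    push_cast
    rw [hwdef]
    simpa using hu3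
  have hw1 : w ≠ 1 := by
    intro h1
    apply hu1
    have := congrArg (fun z : (ZMod p)ˣ => (z : ZMod p)) h1
    simpa [hwdef] using this
  haveI : Fact (Nat.Prime 3) := ⟨by norm_num⟩
  have hord : orderOf w = 3 := orderOf_eq_prime hw3 hw1
  have hdvd : orderOf w ∣ Fintype.card (ZMod p)ˣ := orderOf_dvd_card
  rw [hord, ZMod.card_units_eq_totient, Nat.totient_prime hp] at hdvd
  omega

lemma card_eq_sum_rowLens (μ : YoungDiagram) : μ.card = μ.rowLens.sum := by
  rw [card_decomp, YoungDiagram.rowLens, list_range_map_sum]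

lemma toYoung_card {n : ℕ} (p : n.Partition) : (Nat.Partition.toYoung p).card = n := by
  have hpos : ∀ x ∈ p.parts.sort (· ≥ ·), 0 < x :=
    fun x hx => p.parts_pos ((Multiset.mem_sort _).mp hx)
  have h1 : (Nat.Partition.toYoung p).rowLens = p.parts.sort (· ≥ ·) :=
    YoungDiagram.rowLens_ofRowLens_eq_self hpos
  rw [card_eq_sum_rowLens, h1]
  have h2 : ((p.parts.sort (· ≥ ·) : List ℕ) : Multiset ℕ).sum = p.parts.sum := by
    rw [Multiset.sort_eq]
  rw [← Multiset.sum_coe, h2, p.parts_sum]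

theorem vanishing_three_hooks (ℓ : ℕ) (hp : ℓ.Prime) (h2 : ℓ % 3 = 2)
    (a₁ a₂ : ℕ) (h₁ : a₁ < ℓ ^ 2) (h₂ : a₂ < ℓ ^ 2)
    (hord₁ : (ℓ : ℤ) ∣ (-9 * a₁ + 3 * a₂ + 1))
    (hord₂ : ¬ ((ℓ : ℤ) ^ 2 ∣ (-9 * a₁ + 3 * a₂ + 1))) (n : ℕ) :
    hookP 3 a₁ (ℓ ^ 2) (ℓ ^ 2 * n + a₂) = 0 := by
  haveI : Fact ℓ.Prime := ⟨hp⟩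
  rw [hookP, Fintype.card_eq_zero_iff]
  constructor
  rintro ⟨q, hq⟩
  obtain ⟨x, y, hxy⟩ := key q.toYoung
  rw [toYoung_card q] at hxy
  set hc := hookCount 3 q.toYoung with hhc
  have ha₁ : a₁ % ℓ ^ 2 = a₁ := Nat.mod_eq_of_lt h₁
  obtain ⟨d, hd⟩ : ∃ d, hc = ℓ ^ 2 * d + a₁ := by
    refine ⟨hc / ℓ ^ 2, ?_⟩
    conv_lhs => rw [← Nat.div_add_mod hc (ℓ ^ 2)]
    rw [hq, ha₁]
  have e : x ^ 2 + x * y + y ^ 2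
      = (-9 * (a₁ : ℤ) + 3 * a₂ + 1) + (ℓ : ℤ) ^ 2 * (3 * n - 9 * d) := by
    rw [← hxy, hd]
    push_cast
    ring
  have hdvd1 : (ℓ : ℤ) ∣ x ^ 2 + x * y + y ^ 2 := by
    rw [e]
    exact dvd_add hord₁ ⟨(ℓ : ℤ) * (3 * n - 9 * d), by ring⟩
  have hdvd2 : ¬ ((ℓ : ℤ) ^ 2 ∣ x ^ 2 + x * y + y ^ 2) := by
    rw [e]
    intro hdv
    have hmul : (ℓ : ℤ) ^ 2 ∣ (ℓ : ℤ) ^ 2 * (3 * n - 9 * d) := dvd_mul_right _ _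
    have hsub := hdv.sub hmul
    rw [add_sub_cancel_right] at hsub
    exact hord₂ hsub
  have h0 : ((x : ZMod ℓ)) ^ 2 + (x : ZMod ℓ) * (y : ZMod ℓ) + (y : ZMod ℓ) ^ 2 = 0 := by
    have := (ZMod.intCast_zmod_eq_zero_iff_dvd (x ^ 2 + x * y + y ^ 2) ℓ).mpr hdvd1
    push_cast at this
    exact this
  obtain ⟨hx0, hy0⟩ := zmod_aux ℓ h2 (x : ZMod ℓ) (y : ZMod ℓ) h0
  have hdx : (ℓ : ℤ) ∣ x := (ZMod.intCast_zmod_eq_zero_iff_dvd x ℓ).mp hx0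
  have hdy : (ℓ : ℤ) ∣ y := (ZMod.intCast_zmod_eq_zero_iff_dvd y ℓ).mp hy0
  obtain ⟨u, rfl⟩ := hdx
  obtain ⟨v, rfl⟩ := hdy
  exact hdvd2 ⟨u ^ 2 + u * v + v ^ 2, by ring⟩
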